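/- Let (W,S) be a Coxeter system, s ∈ S, and u, v ∈ W with s ≰ u and s ≰ v in the right weak order. If the join u ∨ v exists in the weak order, then s ≰ u ∨ v. -/

import Mathlib

section CoxeterDefs

variable {B : Type*} {W : Type*} [Group W] {M : CoxeterMatrix B}

/-- The right weak order on a Coxeter group:
`u ≤ v` iff `ℓ(v) = ℓ(u) + ℓ(u⁻¹ v)`. -/
def wle (cs : CoxeterSystem M W) (u v : W) : Prop :=
  cs.length v = cs.length u + cs.length (u⁻¹ * v)

/-- `p` is a sorted list of positions embedding the word `r` as a subword of the
half-infinite word `l^∞ = l | l | l | ⋯` (the letter at position `m` of `l^∞` is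
the `(m % l.length)`-th letter of `l`). -/
def IsEmb (l r : List B) (p : List ℕ) : Prop :=
  p.Pairwise (· < ·) ∧ List.Forall₂ (fun s m => l[m % l.length]? = some s) r p

/-- `r` is the `γ`-sorting word of `w` (for `γ = cs.wordProd l`) with embedding `p`:
`r` is a reduced word for `w` and `p` embeds `r` into `l^∞` lexicographically first
among all embeddings of all reduced words for `w`. -/
def IsSortingPair (cs : CoxeterSystem M W) (l : List B) (w : W)
    (r : List B) (p : List ℕ) : Prop :=
  cs.IsReduced r ∧ cs.wordProd r = w ∧ IsEmb l r p ∧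
    ∀ r' p', cs.IsReduced r' → cs.wordProd r' = w → IsEmb l r' p' →
      ¬ List.Lex (· < ·) p' p

/-- The set of letters of the `j`-th block of the embedded word `(r, p)`:
those letters whose position lies in the `j`-th copy of `l` in `l^∞`. -/
def blockSet (l r : List B) (p : List ℕ) (j : ℕ) : Set B :=
  {s | ∃ q ∈ r.zip p, q.1 = s ∧ q.2 / l.length = j}

/-- `w` is `γ`-sortable for `γ = cs.wordProd l`: the blocks of its `γ`-sorting word
form a weakly decreasing sequence of sets under inclusion. -/
def IsSortable (cs : CoxeterSystem M W) (l : List B) (w : W) : Prop :=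
  ∃ r p, IsSortingPair cs l w r p ∧ ∀ j, blockSet l r p (j + 1) ⊆ blockSet l r p j

/-- `j` is the least upper bound of `A` within `S` (with respect to weak order). -/
def IsLUBIn (cs : CoxeterSystem M W) (S A : Set W) (j : W) : Prop :=
  j ∈ S ∧ (∀ a ∈ A, wle cs a j) ∧ ∀ b ∈ S, (∀ a ∈ A, wle cs a b) → wle cs j b

/-- `m` is the greatest lower bound of `A` within `S` (with respect to weak order). -/
def IsGLBIn (cs : CoxeterSystem M W) (S A : Set W) (m : W) : Prop :=
  m ∈ S ∧ (∀ a ∈ A, wle cs m a) ∧ ∀ b ∈ S, (∀ a ∈ A, wle cs b a) → wle cs b m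

/-- `b` covers `a` within `S` (with respect to weak order). -/
def CovByIn (cs : CoxeterSystem M W) (S : Set W) (a b : W) : Prop :=
  a ∈ S ∧ b ∈ S ∧ wle cs a b ∧ a ≠ b ∧
    ¬ ∃ c ∈ S, (wle cs a c ∧ a ≠ c) ∧ (wle cs c b ∧ c ≠ b)

/-- Join-irreducible in `S`: exactly one lower cover within `S`. -/
def JoinIrrIn (cs : CoxeterSystem M W) (S : Set W) (x : W) : Prop :=
  x ∈ S ∧ ∃! y, CovByIn cs S y x

/-- Meet-irreducible in `S`: exactly one upper cover within `S`. -/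
def MeetIrrIn (cs : CoxeterSystem M W) (S : Set W) (x : W) : Prop :=
  x ∈ S ∧ ∃! y, CovByIn cs S x y

/-- `x` is left-modular in the lattice `S`: for all `y < z` in `S`,
`(y ∨ x) ∧ z = y ∨ (x ∧ z)`, where joins and meets are taken within `S`. -/
def LeftModularIn (cs : CoxeterSystem M W) (S : Set W) (x : W) : Prop :=
  x ∈ S ∧ ∀ y ∈ S, ∀ z ∈ S, wle cs y z → y ≠ z →
    ∀ a b c d : W, IsLUBIn cs S {y, x} a → IsGLBIn cs S {a, z} b →
      IsGLBIn cs S {x, z} c → IsLUBIn cs S {y, c} d → b = d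

/-- A chain of successive covers within `S`. -/
def IsCoverChainIn (cs : CoxeterSystem M W) (S : Set W) (c : List W) : Prop :=
  c.Chain' (CovByIn cs S) ∧ ∀ x ∈ c, x ∈ S

/-- The lattice `S` with least element `u` and greatest element `v` is trim of
length `k`: there is a maximal chain with `k` cover steps all of whose elements are
left-modular, every maximal chain has at most `k` cover steps, and there are exactly
`k` join-irreducible and `k` meet-irreducible elements. -/
def IsTrimIntvl (cs : CoxeterSystem M W) (S : Set W) (u v : W) (k : ℕ) : Prop :=
  (∃ c : List W, IsCoverChainIn cs S c ∧ c.head? = some u ∧ c.getLast? = some v ∧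
      c.length = k + 1 ∧ ∀ x ∈ c, LeftModularIn cs S x) ∧
  (∀ c : List W, IsCoverChainIn cs S c → c.head? = some u → c.getLast? = some v →
      c.length ≤ k + 1) ∧
  {x : W | JoinIrrIn cs S x}.ncard = k ∧ {x : W | MeetIrrIn cs S x}.ncard = k

end CoxeterDefs

namespace StmtAux

open CoxeterSystem List

variable {B : Type*} {W : Type*} [Group W] {M : CoxeterMatrix B} (cs : CoxeterSystem M W)

/-! ### A classical count function -/

open Classical in
/-- Number of occurrences of `t` in `l`, using classical decidability. -/
noncomputable def ccount {α : Type*} (t : α) : List α → ℕ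
  | [] => 0
  | a :: l => (if a = t then 1 else 0) + ccount t l

theorem ccount_nil {α : Type*} (t : α) : ccount t ([] : List α) = 0 := rfl

open Classical in
theorem ccount_cons {α : Type*} (t a : α) (l : List α) :
    ccount t (a :: l) = (if a = t then 1 else 0) + ccount t l := by
  rw [ccount]

theorem ccount_append {α : Type*} (t : α) (l l' : List α) :
    ccount t (l ++ l') = ccount t l + ccount t l' := by
  induction l with
  | nil => simp [ccount_nil]
  | cons a l ih => rw [List.cons_append, ccount_cons, ccount_cons, ih]; omega

theorem mem_of_ccount_ne_zero {α : Type*} {t : α} {l : List α} (h : ccount t l ≠ 0) :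
    t ∈ l := by
  induction l with
  | nil => simp [ccount_nil] at h
  | cons a l ih =>
    rw [ccount_cons] at h
    by_cases ha : a = t
    · exact ha ▸ (List.mem_cons_self (a := a) (l := l))
    · simp only [if_neg ha, zero_add] at h
      exact List.mem_cons_of_mem a (ih h)

theorem ccount_eq_zero_of_not_mem {α : Type*} {t : α} {l : List α} (h : t ∉ l) :
    ccount t l = 0 := by
  induction l with
  | nil => rfl
  | cons a l ih =>
    rw [ccount_cons]
    have ha : ¬ (a = t) := fun hh => h (hh ▸ (List.mem_cons_self (a := a) (l := l)))
    have h2 : t ∉ l := fun hh => h (List.mem_cons_of_mem a hh)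
    rw [if_neg ha, ih h2]

theorem ccount_eq_one_of_nodup_mem {α : Type*} {t : α} {l : List α}
    (hn : l.Nodup) (h : t ∈ l) : ccount t l = 1 := by
  induction l with
  | nil => simp at h
  | cons a l ih =>
    rw [ccount_cons]
    rcases List.mem_cons.mp h with rfl | h'
    · rw [if_pos rfl, ccount_eq_zero_of_not_mem (List.nodup_cons.mp hn).1]
    · have ha : ¬ (a = t) := by
        rintro rfl
        exact (List.nodup_cons.mp hn).1 h'
      rw [if_neg ha, zero_add]
      exact ih (List.nodup_cons.mp hn).2 h'

/-! ### The Bourbaki sign representation -/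

open Classical in
/-- The Bourbaki sign map for the generator `i`. -/
noncomputable def nu (i : B) : W × Bool → W × Bool :=
  fun x => (cs.simple i * x.1 * cs.simple i, if x.1 = cs.simple i then !x.2 else x.2)

theorem nu_invol (i : B) : Function.Involutive (nu cs i) := by
  intro ⟨t, b⟩
  simp only [nu]
  have h1 : cs.simple i * (cs.simple i * t * cs.simple i) * cs.simple i = t := by
    simp [← mul_assoc]
  have h2 : (cs.simple i * t * cs.simple i = cs.simple i) ↔ (t = cs.simple i) := by
    constructor
    · intro h
      have := congrArg (fun y => cs.simple i * y * cs.simple i) h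
      simpa [h1] using this
    · rintro rfl; simp
  by_cases h : t = cs.simple i <;> simp [h, h1, h2]

/-- Product of the sign maps over a word. -/
noncomputable def nuP : List B → W × Bool → W × Bool
  | [] => id
  | i :: ω => nu cs i ∘ nuP ω

theorem rightInvSeq_cons (i : B) (ω : List B) :
    cs.rightInvSeq (i :: ω) =
      ((cs.wordProd ω)⁻¹ * cs.simple i * cs.wordProd ω) :: cs.rightInvSeq ω := rfl

theorem nuP_apply (ω : List B) (t : W) (b : Bool) :
    nuP cs ω (t, b) = (cs.wordProd ω * t * (cs.wordProd ω)⁻¹,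
      if Even (ccount t (cs.rightInvSeq ω)) then b else !b) := by
  induction ω with
  | nil => simp [nuP, ccount_nil]
  | cons i ω ih =>
    rw [show nuP cs (i :: ω) (t, b) = nu cs i (nuP cs ω (t, b)) from rfl, ih]
    simp only [nu, rightInvSeq_cons, cs.wordProd_cons]
    have hcond : (cs.wordProd ω * t * (cs.wordProd ω)⁻¹ = cs.simple i)
        ↔ (t = (cs.wordProd ω)⁻¹ * cs.simple i * cs.wordProd ω) := by
      constructor
      · intro h; rw [← h]; group
      · intro h; rw [h]; group
    have hfst : cs.simple i * (cs.wordProd ω * t * (cs.wordProd ω)⁻¹) * cs.simple i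
        = cs.simple i * cs.wordProd ω * t * (cs.simple i * cs.wordProd ω)⁻¹ := by
      simp [mul_inv_rev, mul_assoc]
    rw [Prod.mk.injEq]
    refine ⟨hfst, ?_⟩
    simp only [ccount_cons]
    by_cases h : t = (cs.wordProd ω)⁻¹ * cs.simple i * cs.wordProd ω
    · have hc : cs.wordProd ω * t * (cs.wordProd ω)⁻¹ = cs.simple i := hcond.mpr h
      rw [if_pos h.symm, if_pos hc]
      by_cases he : Even (ccount t (cs.rightInvSeq ω)) <;>
        simp [he, Nat.even_add_one, Nat.even_add, add_comm]
    · have hc : ¬ (cs.wordProd ω * t * (cs.wordProd ω)⁻¹ = cs.simple i) := by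
        rw [hcond]; exact h
      rw [if_neg hc,
        if_neg (show ¬ ((cs.wordProd ω)⁻¹ * cs.simple i * cs.wordProd ω = t) from
          fun hh => h hh.symm), zero_add]

/-! ### Alternating words -/

theorem alt_drop (p q : B) : ∀ (k n : ℕ),
    (alternatingWord p q n).drop k = alternatingWord p q (n - k) := by
  intro k
  induction k with
  | zero => simp
  | succ k ih =>
    intro n
    match n with
    | 0 => simp [alternatingWord]
    | n + 1 =>
      rw [alternatingWord_succ' p q n, List.drop_succ_cons, ih n]
      congr 1
      omega

theorem alt_split (i i' : B) : ∀ (n k : ℕ),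
    alternatingWord i i' (n + k) =
      alternatingWord (if Even k then i else i') (if Even k then i' else i) n
        ++ alternatingWord i i' k := by
  intro n k
  induction n with
  | zero => simp [alternatingWord]
  | succ n ih =>
    have hnk : n + 1 + k = (n + k) + 1 := by omega
    rw [hnk, alternatingWord_succ' i i' (n + k), ih,
      alternatingWord_succ' (if Even k then i else i') (if Even k then i' else i) n]
    rw [List.cons_append]
    congr 1
    by_cases hk : Even k <;> by_cases hn : Even n <;>
      simp [hk, hn, Nat.even_add]

theorem alt_map (f : B → B) (p q : B) : ∀ (n : ℕ),
    (alternatingWord p q n).map f = alternatingWord (f p) (f q) n := by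
  intro n
  induction n with
  | zero => simp [alternatingWord]
  | succ n ih =>
    rw [alternatingWord_succ', alternatingWord_succ', List.map_cons, ih, apply_ite f]

theorem alt_mem (p q c : B) (n : ℕ) (hc : c ∈ alternatingWord p q n) :
    c = p ∨ c = q := by
  induction n with
  | zero => simp [alternatingWord] at hc
  | succ n ih =>
    rw [alternatingWord_succ'] at hc
    rcases List.mem_cons.mp hc with h | h
    · by_cases hn : Even n
      · right; simpa [hn] using h
      · left; simpa [hn] using h
    · exact ih h

theorem ris_append (ω ω' : List B) :
    cs.rightInvSeq (ω ++ ω') =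
      (cs.rightInvSeq ω).map (fun t => (cs.wordProd ω')⁻¹ * t * cs.wordProd ω')
        ++ cs.rightInvSeq ω' := by
  induction ω with
  | nil => simp
  | cons a ω ih =>
    rw [List.cons_append, rightInvSeq_cons, rightInvSeq_cons, ih, List.map_cons,
      List.cons_append]
    congr 1
    rw [cs.wordProd_append, mul_inv_rev]
    group

/-! ### The dihedral swap -/

open Classical in
/-- Swap `i` and `i'` if `m` is odd. -/
noncomputable def tau (i i' : B) (m : ℕ) : B → B :=
  fun c => if Even m then c else if c = i then i' else i

theorem tau_i (i i' : B) (m : ℕ) : tau i i' m i = if Even m then i else i' := by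
  unfold tau; by_cases h : Even m <;> simp [h]

theorem tau_i' (i i' : B) (m : ℕ) : tau i i' m i' = if Even m then i' else i := by
  unfold tau
  by_cases h : Even m
  · simp [h]
  · by_cases hii : i' = i <;> simp [h, hii]

theorem tau_tau (i i' : B) (m : ℕ) {c : B} (hc : c = i ∨ c = i') :
    tau i i' m (tau i i' m c) = c := by
  by_cases h : Even m
  · simp [tau, h]
  · rcases hc with rfl | rfl
    · rw [tau_i, if_neg h, tau_i', if_neg h]
    · rw [tau_i', if_neg h, tau_i, if_neg h]

theorem tau_mem (i i' : B) (m : ℕ) {c : B} (hc : c = i ∨ c = i') :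
    tau i i' m c = i ∨ tau i i' m c = i' := by
  rcases hc with rfl | rfl
  · rw [tau_i]; by_cases h : Even m <;> simp [h]
  · rw [tau_i']; by_cases h : Even m <;> simp [h]

theorem z_mul_simple (i i' : B) (hm : 0 < M i i') {c : B} (hc : c = i ∨ c = i') :
    cs.wordProd (alternatingWord i i' (M i i')) * cs.simple c
      = cs.simple (tau i i' (M i i') c)
        * cs.wordProd (alternatingWord i i' (M i i')) := by
  set m := M i i' with hmdef
  have hm1 : m = (m - 1) + 1 := by omega
  have hsym : M i' i = m := (M.symmetric i' i).symm ▸ rfl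
  rcases hc with hc | hc
  · -- c = i
    rw [hc]
    have lhs : cs.wordProd (alternatingWord i i' m) * cs.simple i
        = cs.wordProd (alternatingWord i i' (m - 1)) := by
      rw [← cs.wordProd_concat, ← alternatingWord_succ i' i m]
      have h2 : m + 1 ≤ M i' i * 2 := by rw [hsym]; omega
      rw [cs.prod_alternatingWord_eq_prod_alternatingWord_sub i' i (m + 1) h2]
      have harg : M i' i * 2 - (m + 1) = m - 1 := by rw [hsym]; omega
      rw [harg]
    rw [lhs, tau_i]
    by_cases h : Even m
    · rw [if_pos h]
      nth_rewrite 2 [hm1]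
      rw [alternatingWord_succ', cs.wordProd_cons]
      have : ¬ Even (m - 1) := by
        rcases h with ⟨a, ha⟩; intro ⟨b, hb⟩; omega
      rw [if_neg this, ← mul_assoc, cs.simple_mul_simple_self, one_mul]
    · rw [if_neg h]
      nth_rewrite 2 [hm1]
      rw [alternatingWord_succ', cs.wordProd_cons]
      have : Even (m - 1) := by
        rcases Nat.even_or_odd (m-1) with he | ho
        · exact he
        · exfalso; rcases ho with ⟨b, hb⟩
          exact h ⟨b + 1, by omega⟩
      rw [if_pos this, ← mul_assoc, cs.simple_mul_simple_self, one_mul]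
  · -- c = i'
    rw [hc]
    have lhs : cs.wordProd (alternatingWord i i' m) * cs.simple i'
        = cs.wordProd (alternatingWord i' i (m - 1)) := by
      nth_rewrite 1 [hm1]
      rw [alternatingWord_succ i i' (m - 1), cs.wordProd_concat,
        cs.simple_mul_simple_cancel_right]
    rw [lhs, tau_i']
    have key : ∀ h2 : m + 1 ≤ M i i' * 2, cs.wordProd (alternatingWord i i' (m + 1))
        = cs.wordProd (alternatingWord i' i (m - 1)) := by
      intro h2
      rw [cs.prod_alternatingWord_eq_prod_alternatingWord_sub i i' (m + 1) h2]
      have harg : M i i' * 2 - (m + 1) = m - 1 := by rw [← hmdef]; omega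
      rw [harg]
    by_cases h : Even m
    · rw [if_pos h, ← key (by rw [← hmdef]; omega), alternatingWord_succ' i i' m,
        if_pos h, cs.wordProd_cons]
    · rw [if_neg h, ← key (by rw [← hmdef]; omega), alternatingWord_succ' i i' m,
        if_neg h, cs.wordProd_cons]

theorem z_mul_alt (i i' : B) (hm : 0 < M i i') : ∀ (k : ℕ) (p q : B),
    (p = i ∨ p = i') → (q = i ∨ q = i') →
    cs.wordProd (alternatingWord i i' (M i i')) * cs.wordProd (alternatingWord p q k)
      = cs.wordProd (alternatingWord (tau i i' (M i i') p) (tau i i' (M i i') q) k)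
        * cs.wordProd (alternatingWord i i' (M i i')) := by
  intro k
  induction k with
  | zero => intro p q _ _; simp [alternatingWord]
  | succ k ih =>
    intro p q hp hq
    have hcmem : (if Even k then q else p) = i ∨ (if Even k then q else p) = i' := by
      by_cases h : Even k
      · simpa [h] using hq
      · simpa [h] using hp
    rw [alternatingWord_succ' p q k, cs.wordProd_cons, ← mul_assoc,
      z_mul_simple cs i i' hm hcmem, mul_assoc, ih p q hp hq,
      alternatingWord_succ' (tau i i' (M i i') p) (tau i i' (M i i') q) k,
      cs.wordProd_cons, ← mul_assoc]
    congr 2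
    by_cases h : Even k <;> simp [h]

theorem z_tau (i i' : B) :
    cs.wordProd (alternatingWord (tau i i' (M i i') i) (tau i i' (M i i') i') (M i i'))
      = cs.wordProd (alternatingWord i i' (M i i')) := by
  by_cases h : Even (M i i')
  · rw [tau_i, tau_i', if_pos h, if_pos h]
  · rw [tau_i, tau_i', if_neg h, if_neg h]
    have hsym : M i i' = M i' i := M.symmetric i i'
    have key := cs.prod_alternatingWord_eq_prod_alternatingWord_sub i' i (M i' i)
      (by omega)
    have h3 : M i' i * 2 - M i' i = M i' i := by omega
    rw [h3] at key
    rw [hsym, key]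

theorem z_mul_z (i i' : B) :
    cs.wordProd (alternatingWord i i' (M i i'))
      * cs.wordProd (alternatingWord i i' (M i i')) = 1 := by
  nth_rewrite 1 [← z_tau cs i i']
  rw [← cs.wordProd_append]
  have hsplit : alternatingWord i i' (M i i' + M i i')
      = alternatingWord (tau i i' (M i i') i) (tau i i' (M i i') i') (M i i')
        ++ alternatingWord i i' (M i i') := by
    rw [alt_split i i' (M i i') (M i i'), tau_i, tau_i']
  rw [← hsplit]
  rw [cs.prod_alternatingWord_eq_mul_pow]
  have he : Even (M i i' + M i i') := ⟨M i i', rfl⟩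
  rw [if_pos he]
  have : (M i i' + M i i') / 2 = M i i' := by omega
  rw [this, one_mul, cs.simple_mul_simple_pow]

theorem ris_alt_conj (i i' : B) (hm : 0 < M i i') :
    (cs.rightInvSeq (alternatingWord (tau i i' (M i i') i) (tau i i' (M i i') i')
        (M i i'))).map
        (fun t => (cs.wordProd (alternatingWord i i' (M i i')))⁻¹ * t
          * cs.wordProd (alternatingWord i i' (M i i')))
      = cs.rightInvSeq (alternatingWord i i' (M i i')) := by
  have hzz := z_mul_z cs i i'
  have hziv : (cs.wordProd (alternatingWord i i' (M i i')))⁻¹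
      = cs.wordProd (alternatingWord i i' (M i i')) := inv_eq_of_mul_eq_one_right hzz
  apply List.ext_getElem
  · simp
  intro k hk1 hk2
  have hkm : k < M i i' := by simpa using hk2
  rw [List.getElem_map]
  rw [← List.getD_eq_getElem _ 1 (by simpa using hkm),
    ← List.getD_eq_getElem _ 1 (by simpa using hkm)]
  rw [cs.getD_rightInvSeq, cs.getD_rightInvSeq]
  rw [alt_drop, alt_drop]
  -- letters
  have hlet : (alternatingWord (tau i i' (M i i') i) (tau i i' (M i i') i')
      (M i i'))[k]?
      = ((alternatingWord i i' (M i i'))[k]?).map (tau i i' (M i i')) := by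
    rw [← alt_map (tau i i' (M i i')) i i' (M i i'), List.getElem?_map]
  obtain ⟨c, hc⟩ : ∃ c, (alternatingWord i i' (M i i'))[k]? = some c := by
    rw [List.getElem?_eq_getElem (by simpa using hkm)]
    exact ⟨_, rfl⟩
  have hcmem : c = i ∨ c = i' := by
    apply alt_mem i i' c (M i i')
    exact List.mem_of_getElem? hc
  rw [hlet, hc]
  simp only [Option.map_some, Option.getD_some]
  -- now the group computation
  set z := cs.wordProd (alternatingWord i i' (M i i')) with hzdef
  set d := cs.wordProd (alternatingWord i i' (M i i' - (k + 1))) with hddef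
  set dF := cs.wordProd (alternatingWord (tau i i' (M i i') i) (tau i i' (M i i') i')
    (M i i' - (k + 1))) with hdFdef
  have hdF : z * dF = d * z := by
    have h := z_mul_alt cs i i' hm (M i i' - (k + 1)) (tau i i' (M i i') i)
      (tau i i' (M i i') i') (tau_mem i i' _ (Or.inl rfl)) (tau_mem i i' _ (Or.inr rfl))
    rwa [tau_tau i i' _ (Or.inl rfl), tau_tau i i' _ (Or.inr rfl)] at h
  have hc2 : z * cs.simple (tau i i' (M i i') c) = cs.simple c * z := by
    have h := z_mul_simple cs i i' hm (tau_mem i i' (M i i') hcmem)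
    rwa [tau_tau i i' (M i i') hcmem] at h
  have hzw : ∀ w : W, z * (z * w) = w := by
    intro w; rw [← mul_assoc, hzz, one_mul]
  have hcw : ∀ w : W, z * (cs.simple (tau i i' (M i i') c) * (z * w))
      = cs.simple c * w := by
    intro w
    rw [← mul_assoc, hc2, mul_assoc, hzw]
  have hA : dF = z * (d * z) := by
    have := congrArg (fun x => z * x) hdF
    simpa only [hzw] using this
  rw [hA]
  simp only [mul_inv_rev, hziv, mul_assoc]
  rw [hzw, hzz, mul_one, hcw]

theorem ris_alt_even (i i' : B) (hm : 0 < M i i') (t : W) :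
    Even (ccount t (cs.rightInvSeq (alternatingWord i i' (2 * M i i')))) := by
  have h2m : 2 * M i i' = M i i' + M i i' := by omega
  rw [h2m, alt_split i i' (M i i') (M i i'),
    ← tau_i i i' (M i i'), ← tau_i' i i' (M i i'), ris_append, ccount_append,
    ris_alt_conj cs i i' hm]
  exact ⟨ccount t (cs.rightInvSeq (alternatingWord i i' (M i i'))), rfl⟩

/-! ### The homomorphism -/

noncomputable def nuE (i : B) : Equiv.Perm (W × Bool) :=
  Function.Involutive.toPerm _ (nu_invol cs i)

theorem nuE_coe (i : B) : ⇑(nuE cs i) = nu cs i := rfl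

theorem prod_alt_two_mul (i i' : B) :
    cs.wordProd (alternatingWord i i' (2 * M i i')) = 1 := by
  rw [cs.prod_alternatingWord_eq_mul_pow]
  have he : Even (2 * M i i') := ⟨M i i', by omega⟩
  rw [if_pos he]
  have h2 : 2 * M i i' / 2 = M i i' := by omega
  rw [h2, one_mul, cs.simple_mul_simple_pow]

theorem nuE_pow_coe (i i' : B) : ∀ k : ℕ,
    ⇑((nuE cs i * nuE cs i') ^ k) = nuP cs (alternatingWord i i' (2 * k)) := by
  intro k
  induction k with
  | zero => rfl
  | succ k ih =>
    have h1 : 2 * (k + 1) = (2 * k) + 1 + 1 := by omega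
    have h2 : alternatingWord i i' (2 * k + 1 + 1)
        = i :: i' :: alternatingWord i i' (2 * k) := by
      rw [alternatingWord_succ' i i' (2 * k + 1), alternatingWord_succ' i i' (2 * k)]
      have ho : ¬ Even (2 * k + 1) := by simp [Nat.even_add_one, parity_simps]
      have he : Even (2 * k) := ⟨k, by omega⟩
      rw [if_neg ho, if_pos he]
    rw [h1, h2, pow_succ']
    rw [show nuP cs (i :: i' :: alternatingWord i i' (2 * k))
        = nu cs i ∘ (nu cs i' ∘ nuP cs (alternatingWord i i' (2 * k))) from rfl, ← ih]
    rfl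

theorem nuE_liftable : M.IsLiftable (fun i => (nuE cs i : Equiv.Perm (W × Bool))) := by
  intro i i'
  by_cases hm : M i i' = 0
  · rw [hm, pow_zero]
  · have hm' : 0 < M i i' := Nat.pos_of_ne_zero hm
    apply Equiv.ext
    rintro ⟨t, b⟩
    have h1 := congrFun (nuE_pow_coe cs i i' (M i i')) (t, b)
    rw [h1, nuP_apply, prod_alt_two_mul, if_pos (ris_alt_even cs i i' hm' t)]
    simp

noncomputable def phi : W →* Equiv.Perm (W × Bool) :=
  cs.lift ⟨fun i => nuE cs i, nuE_liftable cs⟩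

theorem phi_wordProd (ω : List B) : ⇑(phi cs (cs.wordProd ω)) = nuP cs ω := by
  induction ω with
  | nil => rw [cs.wordProd_nil, map_one]; rfl
  | cons a ω ih =>
    rw [cs.wordProd_cons, map_mul]
    have ha : phi cs (cs.simple a) = nuE cs a := by
      rw [phi, cs.lift_apply_simple]
    rw [Equiv.Perm.coe_mul, ha, ih]
    rfl

theorem ris_parity_inv {ω ω' : List B} (h : cs.wordProd ω = cs.wordProd ω') (t : W) :
    (Even (ccount t (cs.rightInvSeq ω)) ↔ Even (ccount t (cs.rightInvSeq ω'))) := by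
  have h1 := congrFun (phi_wordProd cs ω) (t, false)
  have h2 := congrFun (phi_wordProd cs ω') (t, false)
  rw [h] at h1
  rw [h1] at h2
  rw [nuP_apply, nuP_apply] at h2
  have h3 := congrArg Prod.snd h2
  simp only at h3
  by_cases e1 : Even (ccount t (cs.rightInvSeq ω)) <;>
    by_cases e2 : Even (ccount t (cs.rightInvSeq ω')) <;>
      simp [e1, e2] at h3 ⊢

theorem ccount_reverse {α : Type*} (t : α) (l : List α) :
    ccount t l.reverse = ccount t l := by
  induction l with
  | nil => rfl
  | cons a l ih =>
    rw [List.reverse_cons, ccount_append, ccount_cons, ccount_cons, ccount_nil, ih]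
    omega

theorem lis_parity_inv {ω ω' : List B} (h : cs.wordProd ω = cs.wordProd ω') (t : W) :
    (Even (ccount t (cs.leftInvSeq ω)) ↔ Even (ccount t (cs.leftInvSeq ω'))) := by
  have h' : cs.wordProd ω.reverse = cs.wordProd ω'.reverse := by
    rw [cs.wordProd_reverse, cs.wordProd_reverse, h]
  have := ris_parity_inv cs h' t
  rwa [cs.rightInvSeq_reverse, cs.rightInvSeq_reverse, ccount_reverse, ccount_reverse]
    at this

theorem leftInvSeq_cons (i : B) (ω : List B) :
    cs.leftInvSeq (i :: ω)
      = cs.simple i :: (cs.leftInvSeq ω).map (MulAut.conj (cs.simple i)) := rfl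

/-- The exchange property. -/
theorem simple_mem_leftInvSeq {ω : List B} (hω : cs.IsReduced ω) {i : B}
    (hd : cs.IsLeftDescent (cs.wordProd ω) i) :
    cs.simple i ∈ cs.leftInvSeq ω := by
  obtain ⟨ω', hred', hw'⟩ := cs.exists_reduced_word' (cs.simple i * cs.wordProd ω)
  have hπ : cs.wordProd (i :: ω') = cs.wordProd ω := by
    rw [cs.wordProd_cons, ← hw', cs.simple_mul_simple_cancel_left]
  have hlen : cs.length (cs.simple i * cs.wordProd ω) + 1 = cs.length (cs.wordProd ω) :=
    (cs.isLeftDescent_iff).mp hd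
  have hred2 : cs.IsReduced (i :: ω') := by
    unfold CoxeterSystem.IsReduced at hred' ⊢
    rw [hπ, List.length_cons, ← hred', ← hw']
    omega
  have hmem2 : cs.simple i ∈ cs.leftInvSeq (i :: ω') := by
    rw [leftInvSeq_cons]
    exact List.mem_cons_self
  have hodd : ¬ Even (ccount (cs.simple i) (cs.leftInvSeq (i :: ω'))) := by
    rw [ccount_eq_one_of_nodup_mem hred2.nodup_leftInvSeq hmem2]
    simp
  have hodd2 : ¬ Even (ccount (cs.simple i) (cs.leftInvSeq ω)) := by
    rw [lis_parity_inv cs hπ.symm (cs.simple i)]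
    exact hodd
  apply mem_of_ccount_ne_zero
  intro h0
  rw [h0] at hodd2
  exact hodd2 ⟨0, rfl⟩

/-! ### The deletion lemma -/

theorem tits_lemma (w : W) (i j : B)
    (h1 : cs.length (cs.simple i * w) = cs.length w + 1)
    (h2 : cs.length (w * cs.simple j) = cs.length w + 1)
    (h3 : cs.length (cs.simple i * (w * cs.simple j)) < cs.length (w * cs.simple j)) :
    cs.simple i * w * cs.simple j = w := by
  obtain ⟨ω, hred, hw⟩ := cs.exists_reduced_word' w
  have hπj : cs.wordProd [j] = cs.simple j := by
    rw [cs.wordProd_cons, cs.wordProd_nil, mul_one]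
  have hπr : cs.wordProd (ω ++ [j]) = w * cs.simple j := by
    rw [cs.wordProd_append, hπj, ← hw]
  have hredr : cs.IsReduced (ω ++ [j]) := by
    unfold CoxeterSystem.IsReduced at hred ⊢
    rw [hπr, List.length_append, h2, ← hred, ← hw]
    simp
  have hd : cs.IsLeftDescent (cs.wordProd (ω ++ [j])) i := by
    rw [hπr]
    exact h3
  have hmem := simple_mem_leftInvSeq cs hredr hd
  obtain ⟨k, hk, hget⟩ := List.mem_iff_getElem.mp hmem
  have hkl : k < ω.length + 1 := by simpa using hk
  have hgetD : (cs.leftInvSeq (ω ++ [j])).getD k 1 = cs.simple i := by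
    rw [List.getD_eq_getElem _ 1 hk, hget]
  have hkey := cs.getD_leftInvSeq_mul_wordProd (ω ++ [j]) k
  rw [hgetD, hπr] at hkey
  -- hkey : s i * (w * s j) = π ((ω ++ [j]).eraseIdx k)
  rcases Nat.lt_or_ge k ω.length with hlt | hge
  · exfalso
    rw [List.eraseIdx_append_of_lt_length hlt [j]] at hkey
    rw [cs.wordProd_append, hπj] at hkey
    have hsiw : cs.simple i * w = cs.wordProd (ω.eraseIdx k) := by
      have := congrArg (fun y => y * cs.simple j) hkey
      simpa [mul_assoc] using this
    have hlen1 : cs.length (cs.simple i * w) ≤ (ω.eraseIdx k).length := by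
      rw [hsiw]; exact cs.length_wordProd_le _
    have hlen2 : (ω.eraseIdx k).length + 1 = ω.length :=
      List.length_eraseIdx_add_one hlt
    have hlen3 : ω.length = cs.length w := by rw [← hred, ← hw]
    omega
  · have hkeq : k = ω.length := by omega
    rw [hkeq, List.eraseIdx_append_of_length_le (le_refl ω.length) [j]] at hkey
    simp only [Nat.sub_self, List.eraseIdx_cons_zero, List.append_nil] at hkey
    rw [← hw] at hkey
    rw [← mul_assoc] at hkey
    exact hkey

/-! ### Weak order lemmas -/

theorem wle_trans {u v w : W} (h1 : wle cs u v) (h2 : wle cs v w) : wle cs u w := by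
  unfold wle at *
  have t1 : cs.length (u⁻¹ * w) ≤ cs.length (u⁻¹ * v) + cs.length (v⁻¹ * w) := by
    have := cs.length_mul_le (u⁻¹ * v) (v⁻¹ * w)
    have he : u⁻¹ * v * (v⁻¹ * w) = u⁻¹ * w := by group
    rwa [he] at this
  have t2 : cs.length w ≤ cs.length u + cs.length (u⁻¹ * w) := by
    have := cs.length_mul_le u (u⁻¹ * w)
    have he : u * (u⁻¹ * w) = w := by group
    rwa [he] at this
  omega

theorem wle_simple_iff {i : B} {w : W} :
    wle cs (cs.simple i) w ↔ cs.IsLeftDescent w i := by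
  unfold wle
  rw [cs.inv_simple, cs.length_simple]
  constructor
  · intro h
    unfold CoxeterSystem.IsLeftDescent
    omega
  · intro h
    have := (cs.isLeftDescent_iff).mp h
    omega

/-! ### The lifting lemma -/

theorem wle_lift : ∀ n : ℕ, ∀ j u : W, ∀ i : B, cs.length j ≤ n → wle cs u j →
    ¬ cs.IsLeftDescent u i → cs.IsLeftDescent j i → wle cs u (cs.simple i * j) := by
  intro n
  induction n with
  | zero =>
    intro j u i hn _ _ hdj
    exfalso
    have h0 : cs.length j = 0 := Nat.le_zero.mp hn
    rw [cs.length_eq_zero_iff] at h0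
    rw [h0] at hdj
    exact cs.not_isLeftDescent_one i hdj
  | succ n ih =>
    intro j u i hn hle hdu hdj
    by_cases hju : u⁻¹ * j = 1
    · exfalso
      have : u = j := by
        have h2 := congrArg (fun y => u * y) hju
        simp only [← mul_assoc, mul_inv_cancel, one_mul, mul_one] at h2
        exact h2.symm
      rw [this] at hdu
      exact hdu hdj
    · have hlej : cs.length j = cs.length u + cs.length (u⁻¹ * j) := hle
      have hx0 : cs.length (u⁻¹ * j) ≠ 0 := fun h =>
        hju (cs.length_eq_zero_iff.mp h)
      obtain ⟨ω, hred, hw⟩ := cs.exists_reduced_word' (u⁻¹ * j)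
      have hωlen : ω.length = cs.length (u⁻¹ * j) := by rw [← hred, ← hw]
      have hωne : ω ≠ [] := by
        intro h
        rw [h] at hωlen
        simp at hωlen
        omega
      set c := ω.getLast hωne with hcdef
      set ω₀ := ω.dropLast with hω₀def
      have hsplit : ω₀ ++ [c] = ω := List.dropLast_append_getLast hωne
      have hω₀red : cs.IsReduced ω₀ := by
        rw [hω₀def, List.dropLast_eq_take]
        exact hred.take _
      have hω₀len : ω₀.length + 1 = ω.length := by
        have h1 : ω.length ≠ 0 := fun h => hωne (List.length_eq_zero_iff.mp h)
        rw [hω₀def, List.length_dropLast]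
        omega
      set x' := cs.wordProd ω₀ with hx'def
      have hx'len : cs.length x' = ω₀.length := hω₀red
      have hjdecomp : j = u * (x' * cs.simple c) := by
        rw [hx'def, ← cs.wordProd_concat, List.concat_eq_append, hsplit, ← hw]
        group
      have hj' : j * cs.simple c = u * x' := by
        rw [hjdecomp, mul_assoc, mul_assoc, cs.simple_mul_simple_self, mul_one]
      have hlub : cs.length (j * cs.simple c) ≤ cs.length u + cs.length x' := by
        rw [hj']; exact cs.length_mul_le u x'
      have hlow := cs.length_mul_simple j c
      have hj'len : cs.length (j * cs.simple c) + 1 = cs.length j := by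
        rcases hlow with h | h
        · omega
        · exact h
      have hwle' : wle cs u (j * cs.simple c) := by
        show cs.length (j * cs.simple c)
          = cs.length u + cs.length (u⁻¹ * (j * cs.simple c))
        have he : u⁻¹ * (j * cs.simple c) = x' := by rw [hj']; group
        rw [he]
        omega
      by_cases hd' : cs.IsLeftDescent (j * cs.simple c) i
      · have h5 := ih (j * cs.simple c) u i (by omega) hwle' hdu hd'
        have h6 : wle cs (cs.simple i * (j * cs.simple c)) (cs.simple i * j) := by
          show cs.length (cs.simple i * j)
            = cs.length (cs.simple i * (j * cs.simple c))
              + cs.length ((cs.simple i * (j * cs.simple c))⁻¹ * (cs.simple i * j))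
          have he : (cs.simple i * (j * cs.simple c))⁻¹ * (cs.simple i * j)
              = cs.simple c := by
            rw [mul_inv_rev, mul_assoc, cs.inv_simple, cs.simple_mul_simple_cancel_left,
              mul_inv_rev, mul_assoc, inv_mul_cancel, mul_one, cs.inv_simple]
          rw [he, cs.length_simple]
          have hdj1 := cs.isLeftDescent_iff.mp hdj
          have hdj2 := cs.isLeftDescent_iff.mp hd'
          omega
        exact wle_trans cs h5 h6
      · have hnd := cs.not_isLeftDescent_iff.mp hd'
        have hsc : j * cs.simple c * cs.simple c = j := cs.simple_mul_simple_cancel_right c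
        have ht := tits_lemma cs (j * cs.simple c) i c hnd
          (by rw [hsc]; omega)
          (by rw [hsc]; exact hdj)
        have hfinal : cs.simple i * j = j * cs.simple c := by
          rw [← hsc, ← mul_assoc]
          rw [ht, hsc]
        rw [hfinal]
        exact hwle'

end StmtAux

/-- If `s ≰ u` and `s ≰ v` in right weak order and the join `u ∨ v` exists in the
weak order, then `s ≰ u ∨ v`. -/
theorem stmt_7 {B W : Type*} [Group W] {M : CoxeterMatrix B} (cs : CoxeterSystem M W)
    (i : B) (u v j : W)
    (hu : ¬ wle cs (cs.simple i) u) (hv : ¬ wle cs (cs.simple i) v)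
    (hj : IsLUBIn cs Set.univ {u, v} j) :
    ¬ wle cs (cs.simple i) j := by
  intro h
  obtain ⟨-, hub, hmin⟩ := hj
  have hdj : cs.IsLeftDescent j i := (StmtAux.wle_simple_iff cs).mp h
  have hdu : ¬ cs.IsLeftDescent u i := fun hh => hu ((StmtAux.wle_simple_iff cs).mpr hh)
  have hdv : ¬ cs.IsLeftDescent v i := fun hh => hv ((StmtAux.wle_simple_iff cs).mpr hh)
  have huj : wle cs u j := hub u (Set.mem_insert _ _)
  have hvj : wle cs v j := hub v (Set.mem_insert_of_mem _ rfl)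
  have hul := StmtAux.wle_lift cs (cs.length j) j u i le_rfl huj hdu hdj
  have hvl := StmtAux.wle_lift cs (cs.length j) j v i le_rfl hvj hdv hdj
  have hjl : wle cs j (cs.simple i * j) := by
    apply hmin (cs.simple i * j) (Set.mem_univ _)
    intro a ha
    simp only [Set.mem_insert_iff, Set.mem_singleton_iff] at ha
    rcases ha with rfl | rfl
    · exact hul
    · exact hvl
  have h1 : cs.length (cs.simple i * j) < cs.length j := hdj
  have h2 : cs.length (cs.simple i * j)
      = cs.length j + cs.length (j⁻¹ * (cs.simple i * j)) := hjl
  omega
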